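/- Let f : ℝ → ℝ be a continuous probability density function with f(x) > 0 for all x > 0 and f = 0 on (−∞, 0], satisfying ∫_0^∞ (1/x) f(x) dx < ∞, let F(q) = ∫_0^q f(x) dx, and for r, s > 0 with r/s < ∫_0^∞ (1/x) f(x) dx define a(q) = F(q) + q · ∫_q^∞ (1/x) f(x) dx − r q / s. Then a has a unique global maximizer on (0,∞), namely the unique q* > 0 with ∫_{q*}^∞ (1/x) f(x) dx = r/s; in particular a(q) < a(q*) for every q > 0 with q ≠ q*. -/

import Mathlib

open MeasureTheory Set

/-- Full strength of the paper's Theorem 1: if `r/s < ∫_0^∞ (1/x) f(x) dx`, the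
allocation function `a(q) = F(q) + q ∫_q^∞ (1/x) f(x) dx − r q / s` has a unique
global maximizer on `(0,∞)`, namely the unique `q* > 0` with
`∫_{q*}^∞ (1/x) f(x) dx = r/s`; in particular `a(q) < a(q*)` for `q ≠ q*`. -/
theorem allocation_unique_global_maximizer
    (f : ℝ → ℝ) (hf_cont : Continuous f) (hf_pos : ∀ x > 0, 0 < f x)
    (hf_supp : ∀ x ≤ 0, f x = 0)
    (hf_int : ∫ x, f x = 1)
    (hmoment : IntegrableOn (fun x => (1 / x) * f x) (Ioi 0))
    (r s : ℝ) (hr : 0 < r) (hs : 0 < s)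
    (hrs : r / s < ∫ x in Ioi (0:ℝ), (1 / x) * f x) :
    ∃! qstar : ℝ, 0 < qstar ∧ (∫ x in Ioi qstar, (1 / x) * f x) = r / s ∧
      ∀ q : ℝ, 0 < q → q ≠ qstar →
        (∫ x in (0:ℝ)..q, f x) + q * (∫ x in Ioi q, (1 / x) * f x) - r * q / s <
          (∫ x in (0:ℝ)..qstar, f x) + qstar * (∫ x in Ioi qstar, (1 / x) * f x)
            - r * qstar / s := by
  set g : ℝ → ℝ := fun x => (1 / x) * f x with hg_def
  have hrs_pos : 0 < r / s := div_pos hr hs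
  -- f is integrable
  have hf_integrable : Integrable f := by
    by_contra h
    rw [integral_undef h] at hf_int
    norm_num at hf_int
  -- g vanishes on nonpositive reals
  have hg0 : ∀ x ≤ 0, g x = 0 := fun x hx => by simp [hg_def, hf_supp x hx]
  -- g is integrable on all of ℝ
  have hg_int : Integrable g := by
    have h1 : IntegrableOn g (Iic (0:ℝ)) :=
      (integrableOn_zero).congr_fun (fun x hx => (hg0 x hx).symm) measurableSet_Iic
    have h2 : IntegrableOn g (Iic 0 ∪ Ioi 0) := h1.union hmoment
    rwa [Set.Iic_union_Ioi, integrableOn_univ] at h2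
  have hg_ii : ∀ a b, IntervalIntegrable g volume a b := fun a b => hg_int.intervalIntegrable
  have hf_ii : ∀ a b, IntervalIntegrable f volume a b := fun a b =>
    hf_integrable.intervalIntegrable
  set C : ℝ := ∫ x in Ioi (0:ℝ), g x with hC_def
  set P : ℝ → ℝ := fun q => ∫ x in (0:ℝ)..q, g x with hP_def
  -- tail integral identity
  have hGP : ∀ q : ℝ, 0 ≤ q → (∫ x in Ioi q, g x) = C - P q := by
    intro q hq
    have hsplit : C = P q + ∫ x in Ioi q, g x := by
      rw [hP_def]
      simp only
      rw [intervalIntegral.integral_of_le hq,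
        ← setIntegral_union (Ioc_disjoint_Ioi le_rfl) measurableSet_Ioi
          hg_int.integrableOn hg_int.integrableOn, Set.Ioc_union_Ioi_eq_Ioi hq]
    linarith
  -- P is strictly increasing on [0,∞)
  have hPlt : ∀ p q : ℝ, 0 ≤ p → p < q → P p < P q := by
    intro p q hp hpq
    have hpos : 0 < ∫ x in p..q, g x := by
      apply intervalIntegral.intervalIntegral_pos_of_pos_on (hg_ii p q) _ hpq
      intro x hx
      have hx0 : 0 < x := lt_of_le_of_lt hp hx.1
      exact mul_pos (by positivity) (hf_pos x hx0)
    have hadd : P p + ∫ x in p..q, g x = P q :=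
      intervalIntegral.integral_add_adjacent_intervals (hg_ii 0 p) (hg_ii p q)
    linarith
  have hPcont : Continuous P := intervalIntegral.continuous_primitive hg_ii 0
  have hP0 : P 0 = 0 := intervalIntegral.integral_same
  -- find a point where the tail is below r/s
  have htend : Filter.Tendsto P Filter.atTop (nhds C) :=
    intervalIntegral_tendsto_integral_Ioi 0 hmoment Filter.tendsto_id
  have hCrs : r / s < C := hrs
  obtain ⟨t, ht0, htP⟩ : ∃ t : ℝ, 0 < t ∧ C - r / s < P t := by
    have h1 : ∀ᶠ t in Filter.atTop, C - r / s < P t :=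
      htend.eventually (eventually_gt_nhds (by linarith))
    have h2 : ∀ᶠ t : ℝ in Filter.atTop, 0 < t := Filter.eventually_gt_atTop 0
    obtain ⟨t, h1, h2⟩ := (h2.and h1).exists
    exact ⟨t, h1, h2⟩
  -- IVT to find qstar
  have hIVT : r / s ∈ (fun q => C - P q) '' Icc 0 t := by
    apply intermediate_value_Icc' ht0.le (by fun_prop)
    constructor
    · linarith
    · simp [hP0]; linarith
  obtain ⟨qstar, hqmem, hqval⟩ := hIVT
  have hqval : C - P qstar = r / s := hqval
  have hq0 : 0 < qstar := by
    rcases eq_or_lt_of_le hqmem.1 with h | h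
    · exfalso; rw [← h] at hqval; rw [hP0] at hqval; simp at hqval; linarith
    · exact h
  -- the allocation function, rewritten
  set A : ℝ → ℝ := fun q => (∫ x in (0:ℝ)..q, f x) + q * (C - P q) - r * q / s with hA_def
  have hgq : ∀ q : ℝ, 0 < q → q * g q = f q := by
    intro q hq
    rw [hg_def]
    field_simp
  -- derivative of A
  have hA_deriv : ∀ q : ℝ, 0 < q → HasDerivAt A (C - P q - r / s) q := by
    intro q hq
    have hPf' : HasDerivAt (fun u => ∫ x in (0:ℝ)..u, f x) (f q) q :=
      intervalIntegral.integral_hasDerivAt_right (hf_ii 0 q)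
        hf_cont.stronglyMeasurable.stronglyMeasurableAtFilter hf_cont.continuousAt
    have hg_meas : StronglyMeasurable g :=
      ((measurable_const.div measurable_id).mul hf_cont.measurable).stronglyMeasurable
    have hg_contAt : ContinuousAt g q :=
      ((continuousAt_const.div continuousAt_id hq.ne').mul hf_cont.continuousAt)
    have hP' : HasDerivAt P (g q) q :=
      intervalIntegral.integral_hasDerivAt_right (hg_ii 0 q)
        hg_meas.stronglyMeasurableAtFilter hg_contAt
    have h2 : HasDerivAt (fun u => u * (C - P u)) (1 * (C - P q) + q * (-(g q))) q :=
      (hasDerivAt_id q).mul (hP'.const_sub C)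
    have h3 : HasDerivAt (fun u : ℝ => r * u / s) (r * 1 / s) q :=
      ((hasDerivAt_id q).const_mul r).div_const s
    have htot := (hPf'.add h2).sub h3
    refine htot.congr_deriv ?_
    rw [mul_one, one_mul, mul_neg, hgq q hq]
    ring
  have hAcont : Continuous A := by
    rw [hA_def]
    have := intervalIntegral.continuous_primitive hf_ii 0
    fun_prop
  -- strict mono on [0, qstar]
  have hmono : StrictMonoOn A (Icc 0 qstar) := by
    apply strictMonoOn_of_deriv_pos (convex_Icc 0 qstar) hAcont.continuousOn
    intro x hx
    rw [interior_Icc] at hx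
    rw [(hA_deriv x hx.1).deriv]
    have := hPlt x qstar hx.1.le hx.2
    linarith
  -- strict anti on [qstar, ∞)
  have hanti : StrictAntiOn A (Ici qstar) := by
    apply strictAntiOn_of_deriv_neg (convex_Ici qstar) hAcont.continuousOn
    intro x hx
    rw [interior_Ici] at hx
    rw [(hA_deriv x (hq0.trans hx)).deriv]
    have := hPlt qstar x hq0.le hx
    linarith
  -- main maximality statement
  have hmax : ∀ q : ℝ, 0 < q → q ≠ qstar → A q < A qstar := by
    intro q hq hne
    rcases lt_or_gt_of_ne hne with h | h
    · exact hmono ⟨hq.le, h.le⟩ ⟨hq0.le, le_rfl⟩ h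
    · exact hanti self_mem_Ici (le_of_lt h) h
  -- translate to the original form
  have hkey : ∀ q : ℝ, 0 < q →
      (∫ x in (0:ℝ)..q, f x) + q * (∫ x in Ioi q, (1 / x) * f x) - r * q / s = A q := by
    intro q hq
    rw [hA_def]
    simp only
    rw [show (∫ x in Ioi q, (1 / x) * f x) = ∫ x in Ioi q, g x from rfl, hGP q hq.le]
  refine ⟨qstar, ⟨hq0, ?_, ?_⟩, ?_⟩
  · rw [show (∫ x in Ioi qstar, (1 / x) * f x) = ∫ x in Ioi qstar, g x from rfl,
      hGP qstar hq0.le, hqval]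
  · intro q hq hne
    rw [hkey q hq, hkey qstar hq0]
    exact hmax q hq hne
  · rintro y ⟨hy0, hyval, hymax⟩
    by_contra hne
    have h1 := hymax qstar hq0 (fun h => hne h.symm)
    have h2 : ∀ q : ℝ, 0 < q → q ≠ qstar →
        (∫ x in (0:ℝ)..q, f x) + q * (∫ x in Ioi q, (1 / x) * f x) - r * q / s <
          (∫ x in (0:ℝ)..qstar, f x) + qstar * (∫ x in Ioi qstar, (1 / x) * f x)
            - r * qstar / s := by
      intro q hq hne'
      rw [hkey q hq, hkey qstar hq0]
      exact hmax q hq hne'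
    have h3 := h2 y hy0 hne
    linarith
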